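/- Let F be a field and let M be an n×n monomial matrix over F; write M = D·P where D is an invertible diagonal matrix and P is the permutation matrix of a permutation σ. For each cycle C_j of σ (including fixed points as cycles of length 1), let n_j be its length and let c_j be the product of the nonzero entries of M in the positions of that cycle. Then the characteristic polynomial of M equals ∏_j (x^{n_j} - c_j). -/

import Mathlib

open Polynomial

open Matrix

lemma neg_one_units_smul {F : Type*} [Field F] (k : ℕ) (q : F[X]) :
    ((-1 : ℤˣ)^k) • q = (-1:F[X])^k * q := by
  rcases Nat.even_or_odd k with hk | hk
  · rw [hk.neg_one_pow, (hk.neg_one_pow : (-1:F[X])^k = 1), one_smul, one_mul]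
  · rw [hk.neg_one_pow, (hk.neg_one_pow : (-1:F[X])^k = -1), Units.smul_def]
    simp

open Fin.NatCast in
lemma circ_det_aux {F : Type*} [Field F] (m : ℕ) (v : Fin (m+2) → F) :
    Matrix.det (Matrix.of fun a b : Fin (m+2) =>
      (if a = b then (X : F[X]) else 0) - if a = b + 1 then C (v b) else 0)
      = X ^ (m+2) - C (∏ b, v b) := by
    have hone : (1 : Fin (m+2)) ≠ 0 := by
      rw [Ne, Fin.one_eq_zero_iff]; omega
    rw [Matrix.det_apply]
    have key : ∀ τ : Equiv.Perm (Fin (m+2)), τ ∉ ({1, finRotate (m+2)} : Finset (Equiv.Perm (Fin (m+2)))) →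
        (Equiv.Perm.sign τ) • ∏ i, (Matrix.of fun a b : Fin (m+2) =>
          (if a = b then (X : F[X]) else 0) - if a = b + 1 then C (v b) else 0) (τ i) i = 0 := by
      intro τ hτ
      simp only [Finset.mem_insert, Finset.mem_singleton] at hτ
      push_neg at hτ
      suffices h : ∃ i, (if τ i = i then (X : F[X]) else 0) - (if τ i = i + 1 then C (v i) else 0) = 0 by
        obtain ⟨i, hi⟩ := h
        rw [Finset.prod_eq_zero (Finset.mem_univ i) (by simpa using hi)]
        simp
      by_contra h
      push_neg at h
      have hstep : ∀ i, τ i = i ∨ τ i = i + 1 := by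
        intro i
        by_contra hc
        push_neg at hc
        exact h i (by rw [if_neg hc.1, if_neg hc.2]; ring)
      by_cases hid : ∀ i, τ i = i
      · exact hτ.1 (Equiv.ext hid)
      · push_neg at hid
        obtain ⟨b, hb⟩ := hid
        have hb1 : τ b = b + 1 := (hstep b).resolve_left hb
        have hall : ∀ k : ℕ, τ (b + (k : Fin (m+2))) = b + (k : Fin (m+2)) + 1 := by
          intro k
          induction k with
          | zero => simpa using hb1
          | succ k ih =>
            have hne : τ (b + (k : Fin (m+2)) + 1) ≠ b + (k : Fin (m+2)) + 1 := by
              intro hcon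
              have h2 : b + (k : Fin (m+2)) + 1 = b + (k : Fin (m+2)) := τ.injective (hcon.trans ih.symm)
              rw [add_eq_left] at h2
              exact hone h2
            have e : ((k+1 : ℕ) : Fin (m+2)) = (k : Fin (m+2)) + 1 := by push_cast; ring
            rw [e, ← add_assoc]
            exact (hstep _).resolve_left hne
        apply hτ.2
        apply Equiv.ext
        intro x
        have hx := hall ((x - b : Fin (m+2)) : ℕ)
        rw [Fin.cast_val_eq_self, add_comm b (x - b), sub_add_cancel] at hx
        rw [finRotate_succ_apply]
        exact hx
    rw [← Finset.sum_subset (Finset.subset_univ ({1, finRotate (m+2)} : Finset (Equiv.Perm (Fin (m+2))))) (fun τ _ h => key τ h)]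
    have hne : (1 : Equiv.Perm (Fin (m+2))) ≠ finRotate (m+2) := by
      intro hcon
      have h0 : (0 : Fin (m+2)) = 0 + 1 := by
        conv_lhs => rw [show (0:Fin (m+2)) = (1 : Equiv.Perm (Fin (m+2))) 0 from rfl, hcon, finRotate_succ_apply]
      rw [zero_add] at h0
      exact hone h0.symm
    rw [Finset.sum_pair hne]
    have t1 : (Equiv.Perm.sign (1 : Equiv.Perm (Fin (m+2)))) • ∏ i, (Matrix.of fun a b : Fin (m+2) =>
          (if a = b then (X : F[X]) else 0) - if a = b + 1 then C (v b) else 0) ((1 : Equiv.Perm (Fin (m+2))) i) i = X ^ (m+2) := by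
      rw [show Equiv.Perm.sign (1 : Equiv.Perm (Fin (m+2))) = 1 from map_one _, one_smul]
      have hdiag : ∀ i : Fin (m+2),
          (Matrix.of fun a b : Fin (m+2) =>
            (if a = b then (X : F[X]) else 0) - if a = b + 1 then C (v b) else 0)
            ((1 : Equiv.Perm (Fin (m+2))) i) i = X := by
        intro i
        simp only [Equiv.Perm.coe_one, id_eq, Matrix.of_apply]
        rw [if_true, if_neg (fun hcon => hone ((left_eq_add).mp hcon)), sub_zero]
      rw [Finset.prod_congr rfl (fun i _ => hdiag i), Finset.prod_const, Finset.card_univ,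
        Fintype.card_fin]
    have t2 : (Equiv.Perm.sign (finRotate (m+2))) • ∏ i, (Matrix.of fun a b : Fin (m+2) =>
          (if a = b then (X : F[X]) else 0) - if a = b + 1 then C (v b) else 0) ((finRotate (m+2)) i) i = - C (∏ b, v b) := by
      have hsign : Equiv.Perm.sign (finRotate (m+2)) = (-1)^(m+1) := sign_finRotate (m+2)
      have hprod : ∏ i, (Matrix.of fun a b : Fin (m+2) =>
          (if a = b then (X : F[X]) else 0) - if a = b + 1 then C (v b) else 0) ((finRotate (m+2)) i) i
          = (-1:F[X])^(m+2) * C (∏ b, v b) := by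
        have hsub : ∀ i : Fin (m+2),
            (Matrix.of fun a b : Fin (m+2) =>
              (if a = b then (X : F[X]) else 0) - if a = b + 1 then C (v b) else 0)
              ((finRotate (m+2)) i) i = -1 * C (v i) := by
          intro i
          simp only [Matrix.of_apply, finRotate_succ_apply]
          rw [if_neg (fun hcon => hone ((add_eq_left).mp hcon))]
          rw [if_true]
          ring
        rw [Finset.prod_congr rfl (fun i _ => hsub i), Finset.prod_mul_distrib,
          Finset.prod_const, Finset.card_univ, Fintype.card_fin, map_prod]
      rw [hsign, hprod, neg_one_units_smul, ← mul_assoc, ← pow_add]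
      have he : m + 1 + (m+2) = 2 * (m+1) + 1 := by omega
      rw [he, pow_succ, pow_mul]
      norm_num
    rw [t1, t2]
    ring

lemma circ_det {F : Type*} [Field F] (n : ℕ) [NeZero n] (v : Fin n → F) :
    Matrix.det (Matrix.of fun a b : Fin n =>
      (if a = b then (X : F[X]) else 0) - if a = b + 1 then C (v b) else 0)
      = X ^ n - C (∏ b, v b) := by
  obtain _ | _ | m := n
  · exact absurd rfl (NeZero.ne 0)
  · rw [Matrix.det_fin_one]
    simp
  · exact circ_det_aux m v

/-- Characteristic polynomial of a monomial matrix `M = D · P`, where `D` is an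
invertible diagonal matrix and `P` is the permutation matrix of `σ`.  The set
`R` consists of one representative from each cycle of `σ` (including fixed points
as cycles of length 1); for a representative `r`, the cycle length is
`Function.minimalPeriod σ r` and the product of the nonzero entries of `M` along
that cycle is `∏ k in range ℓ, M (σ (σ^k r)) (σ^k r)`.  Then
`charpoly M = ∏_j (X ^ n_j - c_j)`. -/
theorem stmt_10 {F : Type*} [Field F] {ι : Type*} [Fintype ι] [DecidableEq ι]
    (σ : Equiv.Perm ι) (d : ι → F) (hd : ∀ i, d i ≠ 0)
    (P M : Matrix ι ι F)
    (hP : ∀ i j, P i j = if σ j = i then 1 else 0)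
    (hM : M = Matrix.diagonal d * P)
    (R : Finset ι) (hR : ∀ i : ι, ∃! r, r ∈ R ∧ σ.SameCycle r i) :
    M.charpoly =
      ∏ r ∈ R,
        ((Polynomial.X : F[X]) ^ (Function.minimalPeriod σ r) -
          Polynomial.C (∏ k ∈ Finset.range (Function.minimalPeriod σ r),
            M (σ ((σ ^ k) r)) ((σ ^ k) r))) := by
  classical
  -- entries of M
  have hMij : ∀ i j, M i j = if σ j = i then d i else 0 := by
    intro i j
    rw [hM, Matrix.diagonal_mul, hP]
    split_ifs <;> simp
  -- all points are periodic
  have hper : ∀ x : ι, x ∈ Function.periodicPts σ := by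
    intro x
    exact ⟨orderOf σ, orderOf_pos σ, by
      rw [Function.IsPeriodicPt, Function.IsFixedPt, Equiv.Perm.iterate_eq_pow,
        pow_orderOf_eq_one]; rfl⟩
  have hnp : ∀ x : ι, 0 < Function.minimalPeriod σ x :=
    fun x => Function.minimalPeriod_pos_of_mem_periodicPts (hper x)
  -- iterate below minimalPeriod determines index
  have hiter : ∀ (r : ι) (k l : ℕ), k < Function.minimalPeriod σ r →
      l < Function.minimalPeriod σ r → ((σ ^ k) r = (σ ^ l) r ↔ k = l) := by
    intro r k l hk hl
    have := Function.iterate_eq_iterate_iff_of_lt_minimalPeriod (f := ⇑σ) (x := r) hk hl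
    rwa [Equiv.Perm.iterate_eq_pow, Equiv.Perm.iterate_eq_pow] at this
  -- the representative map
  set rep : ι → ι := fun i => (hR i).choose with hrepdef
  have hrepR : ∀ i, rep i ∈ R := fun i => (hR i).choose_spec.1.1
  have hrepC : ∀ i, σ.SameCycle (rep i) i := fun i => (hR i).choose_spec.1.2
  have hrepU : ∀ i r, r ∈ R → σ.SameCycle r i → r = rep i :=
    fun i r h1 h2 => (hR i).choose_spec.2 r ⟨h1, h2⟩
  have hrep_self : ∀ r ∈ R, rep r = r := fun r hr =>
    (hrepU r r hr (Equiv.Perm.SameCycle.refl σ r)).symm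
  have hrep_pow : ∀ (r : ι) (k : ℕ), r ∈ R → rep ((σ ^ k) r) = r := by
    intro r k hr
    exact (hrepU ((σ ^ k) r) r hr ⟨(k : ℤ), by rw [zpow_natCast]⟩).symm
  -- block ordering
  set eb : ι ≃ Fin (Fintype.card ι) := Fintype.equivFin ι with hebdef
  set b : ι → Fin (Fintype.card ι) := fun i => eb (rep i) with hbdef
  have hA0 : ∀ i j, rep i ≠ rep j → M.charmatrix i j = 0 := by
    intro i j hij
    have hne : i ≠ j := fun h => hij (by rw [h])
    have hrep_eq : ∀ x y : ι, σ.SameCycle x y → rep x = rep y := fun x y h =>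
      hrepU y (rep x) (hrepR x) ((hrepC x).trans h)
    have hne2 : σ j ≠ i := by
      intro h
      exact hij (by rw [← h, (hrep_eq j (σ j) ⟨1, by simp⟩)])
    rw [Matrix.charmatrix_apply_ne _ _ _ hne, hMij, if_neg hne2, map_zero, neg_zero]
  have hBT : (M.charmatrix).BlockTriangular b := by
    intro i j hlt
    exact hA0 i j (fun h => hlt.ne' (congrArg eb h))
  have hdet := hBT.det
  have himg : Finset.univ.image b = R.image eb := by
    ext a
    simp only [Finset.mem_image, Finset.mem_univ, true_and]
    constructor
    · rintro ⟨i, rfl⟩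
      exact ⟨rep i, hrepR i, rfl⟩
    · rintro ⟨r, hr, rfl⟩
      exact ⟨r, by rw [hbdef]; simp [hrep_self r hr]⟩
  rw [Matrix.charpoly, hdet, himg, Finset.prod_image (fun x _ y _ h => eb.injective h)]
  apply Finset.prod_congr rfl
  intro r hr
  -- analyze a single block
  set n := Function.minimalPeriod σ r with hndef
  haveI : NeZero n := ⟨(hnp r).ne'⟩
  have hmem : ∀ i : ι, b i = eb r ↔ σ.SameCycle r i := by
    intro i
    constructor
    · intro h
      have : rep i = r := eb.injective h
      exact this ▸ hrepC i
    · intro h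
      rw [hbdef]
      simp only
      congr 1
      exact (hrepU i r hr h).symm
  -- the equivalence Fin n ≃ block
  have hpow_mem : ∀ k : ℕ, b ((σ ^ k) r) = eb r := by
    intro k
    rw [hbdef]
    simp [hrep_pow r k hr]
  have hmod : ∀ k : ℕ, (σ ^ (k % n)) r = (σ ^ k) r := by
    intro k
    have := Function.iterate_mod_minimalPeriod_eq (f := ⇑σ) (x := r) (n := k)
    rwa [Equiv.Perm.iterate_eq_pow, Equiv.Perm.iterate_eq_pow] at this
  have hsurj : ∀ i : { a // b a = eb r }, ∃ k : Fin n, (σ ^ (k : ℕ)) r = (i : ι) := by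
    intro i
    obtain ⟨m, hm, hmi⟩ := ((hmem i).mp i.2).exists_pow_eq'
    exact ⟨⟨m % n, Nat.mod_lt _ (hnp r)⟩, by rw [← hmi]; exact hmod m⟩
  let e : Fin n ≃ { a // b a = eb r } :=
    Equiv.ofBijective (fun k => ⟨(σ ^ (k : ℕ)) r, hpow_mem k⟩) (by
      constructor
      · intro k l hkl
        have h' : (σ ^ (k:ℕ)) r = (σ ^ (l:ℕ)) r := congrArg Subtype.val hkl
        exact Fin.ext ((hiter r k l k.2 l.2).mp h')
      · intro i
        obtain ⟨k, hk⟩ := hsurj i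
        exact ⟨k, Subtype.ext hk⟩)
  rw [← Matrix.det_submatrix_equiv_self e]
  have hblock : ((M.charmatrix).toSquareBlock b (eb r)).submatrix e e =
      Matrix.of fun a c : Fin n =>
        (if a = c then (X : F[X]) else 0) - if a = c + 1 then C (d (σ ((σ ^ (c:ℕ)) r))) else 0 := by
    refine Matrix.ext fun a c => ?_
    have he : ∀ k : Fin n, ((e k : { a // b a = eb r }) : ι) = (σ ^ (k : ℕ)) r := fun k => rfl
    simp only [Matrix.submatrix_apply, Matrix.toSquareBlock_def, Matrix.of_apply,
      Matrix.charmatrix_apply, Matrix.diagonal_apply, he, hMij]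
    have h1 : ((σ ^ (a:ℕ)) r = (σ ^ (c:ℕ)) r) ↔ a = c := by
      rw [hiter r a c a.2 c.2, Fin.val_eq_val]
    have hs : σ ((σ ^ (c:ℕ)) r) = (σ ^ (((c + 1 : Fin n)) : ℕ)) r := by
      have hval : (((c + 1 : Fin n)) : ℕ) = ((c : ℕ) + 1) % n := by
        rw [Fin.add_def, Fin.val_one', Nat.add_mod ((c:ℕ)) 1 n, Nat.mod_eq_of_lt c.2]
      rw [hval, hmod, pow_succ', Equiv.Perm.mul_apply]
    have h2 : (σ ((σ ^ (c:ℕ)) r) = (σ ^ (a:ℕ)) r) ↔ a = c + 1 := by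
      rw [hs, hiter r _ _ (c+1).2 a.2, Fin.val_eq_val, eq_comm]
    rw [apply_ite C, map_zero]
    refine congrArg₂ (fun x y : F[X] => x - y) ?_ ?_
    · exact if_congr h1 rfl rfl
    · by_cases hc : a = c + 1
      · rw [if_pos (h2.mpr hc), if_pos hc, hc, ← hs]
      · rw [if_neg (fun h => hc (h2.mp h)), if_neg hc]
  rw [hblock, circ_det]
  congr 2
  rw [Fin.prod_univ_eq_prod_range (fun k => d (σ ((σ ^ k) r))) n]
  exact Finset.prod_congr rfl (fun k _ => by rw [hMij, if_pos rfl])
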